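/- arXiv:2504.13464 — 2 statements merged into one kernel-verified Lean document; each statement's English description precedes it below -/
import Mathlib

section
/- Let X be a Banach space and let Y be a proper linear subspace of X. If Y intersects the relative interior of every maximal face of B_X (i.e. for every maximal face F of B_X there exists y ∈ Y ∩ int(F)), then Y is strongly anti-coproximinal in X. -/
open Filter Topology Metric NormedSpace

/-- `F` is a face of the closed unit ball `B_X`. -/
def IsFaceOfBall (𝕜 : Type*) {X : Type*} [RCLike 𝕜] [NormedAddCommGroup X]
    [NormedSpace 𝕜 X] (F : Set X) : Prop :=
  (F ⊆ {x | ‖x‖ = 1}) ∧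
  (∀ u ∈ F, ∀ v ∈ F, ∀ t : ℝ, 0 ≤ t → t ≤ 1 → ((1 - t : ℝ) : 𝕜) • u + (t : 𝕜) • v ∈ F) ∧
  (∀ u v : X, ‖u‖ ≤ 1 → ‖v‖ ≤ 1 → (2⁻¹ : 𝕜) • (u + v) ∈ F → u ∈ F ∧ v ∈ F)

/-- `F` is a maximal face of `B_X`. -/
def IsMaximalFaceOfBall (𝕜 : Type*) {X : Type*} [RCLike 𝕜] [NormedAddCommGroup X]
    [NormedSpace 𝕜 X] (F : Set X) : Prop :=
  IsFaceOfBall 𝕜 F ∧ ∀ F' : Set X, IsFaceOfBall 𝕜 F' → F ⊆ F' → F' = F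

/-- `x` lies in the relative (algebraic) interior of the face `F`. -/
def MemRelIntFace (𝕜 : Type*) {X : Type*} [RCLike 𝕜] [NormedAddCommGroup X]
    [NormedSpace 𝕜 X] (F : Set X) (x : X) : Prop :=
  x ∈ F ∧ ∀ w ∈ F, ∃ z ∈ F, ∃ t : ℝ, 0 < t ∧ t < 1 ∧
    x = ((1 - t : ℝ) : 𝕜) • w + (t : 𝕜) • z

/-- `S` is strongly anti-coproximinal. -/
def StronglyAntiCoproximinal (𝕜 : Type*) {X : Type*} [RCLike 𝕜] [NormedAddCommGroup X]
    [NormedSpace 𝕜 X] (S : Set X) : Prop :=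
  ∀ x : X, x ≠ 0 → ∀ ε : ℝ, 0 ≤ ε → ε < 1 →
    ∃ y ∈ S, ¬ ∀ lam : 𝕜, ‖y‖ - ε * ‖lam • x‖ ≤ ‖y + lam • x‖

lemma aux_one_of_re_one {𝕜 : Type*} [RCLike 𝕜] {z : 𝕜} (h1 : ‖z‖ ≤ 1)
    (h2 : RCLike.re z = 1) : z = 1 := by
  have hn : ‖z‖ ^ 2 = RCLike.re z ^ 2 + RCLike.im z ^ 2 := by
    rw [RCLike.norm_sq_eq_def]; ring
  have him : RCLike.im z = 0 := by nlinarith [norm_nonneg z]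
  apply RCLike.ext <;> simp [h2, him]

lemma aux_norming_face (𝕜 : Type*) {X : Type*} [RCLike 𝕜] [NormedAddCommGroup X]
    [NormedSpace 𝕜 X] (u : X) (hu : ‖u‖ = 1) :
    ∃ F : Set X, IsFaceOfBall 𝕜 F ∧ u ∈ F := by
  have hu0 : u ≠ 0 := by intro h0; rw [h0] at hu; simp at hu
  obtain ⟨g, hg1, hgu⟩ := exists_dual_vector 𝕜 u (norm_ne_zero_iff.mpr hu0)
  refine ⟨{v | ‖v‖ ≤ 1 ∧ g v = 1}, ⟨?_, ?_, ?_⟩, ?_⟩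
  · rintro v ⟨hv1, hv2⟩
    have : (1 : ℝ) ≤ ‖v‖ := by
      calc (1:ℝ) = ‖g v‖ := by rw [hv2]; simp
      _ ≤ ‖g‖ * ‖v‖ := g.le_opNorm v
      _ = ‖v‖ := by rw [hg1, one_mul]
    exact le_antisymm hv1 this
  · rintro a ⟨ha1, ha2⟩ b ⟨hb1, hb2⟩ t ht0 ht1
    constructor
    · calc ‖((1 - t : ℝ) : 𝕜) • a + (t : 𝕜) • b‖ ≤ ‖((1 - t : ℝ) : 𝕜) • a‖ + ‖(t : 𝕜) • b‖ :=
        norm_add_le _ _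
      _ = (1 - t) * ‖a‖ + t * ‖b‖ := by
          rw [norm_smul, norm_smul, RCLike.norm_ofReal, RCLike.norm_ofReal,
            abs_of_nonneg (by linarith), abs_of_nonneg ht0]
      _ ≤ (1 - t) * 1 + t * 1 := by
          have h1t : (0:ℝ) ≤ 1 - t := by linarith
          gcongr
      _ = 1 := by ring
    · simp only [map_add, map_smul, ha2, hb2, smul_eq_mul, mul_one]
      push_cast; ring
  · rintro a b ha hb ⟨_, hmid⟩
    have hmid' : g a + g b = 2 := by
      have := hmid
      rw [map_smul, map_add, smul_eq_mul] at this
      have h2 : (2⁻¹ : 𝕜) ≠ 0 := by norm_num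
      field_simp at this
      linear_combination this
    have hna : ‖g a‖ ≤ 1 := by
      calc ‖g a‖ ≤ ‖g‖ * ‖a‖ := g.le_opNorm a
      _ ≤ 1 := by rw [hg1, one_mul]; exact ha
    have hnb : ‖g b‖ ≤ 1 := by
      calc ‖g b‖ ≤ ‖g‖ * ‖b‖ := g.le_opNorm b
      _ ≤ 1 := by rw [hg1, one_mul]; exact hb
    have hra : RCLike.re (g a) ≤ 1 := le_trans (RCLike.re_le_norm _) hna
    have hrb : RCLike.re (g b) ≤ 1 := le_trans (RCLike.re_le_norm _) hnb
    have hsum : RCLike.re (g a) + RCLike.re (g b) = 2 := by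
      have := congrArg RCLike.re hmid'
      simpa using this
    have hga : g a = 1 := aux_one_of_re_one hna (by linarith)
    have hgb : g b = 1 := aux_one_of_re_one hnb (by linarith)
    exact ⟨⟨ha, hga⟩, ⟨hb, hgb⟩⟩
  · exact ⟨le_of_eq hu, by rw [hgu, hu]; norm_num⟩

lemma aux_exists_maximal_face (𝕜 : Type*) {X : Type*} [RCLike 𝕜] [NormedAddCommGroup X]
    [NormedSpace 𝕜 X] (u : X) (hu : ‖u‖ = 1) :
    ∃ F : Set X, IsMaximalFaceOfBall 𝕜 F ∧ u ∈ F := by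
  obtain ⟨F₀, hF₀, huF₀⟩ := aux_norming_face 𝕜 u hu
  set S : Set (Set X) := {F | IsFaceOfBall 𝕜 F ∧ u ∈ F}
  have hzorn : ∃ m, F₀ ⊆ m ∧ Maximal (· ∈ S) m := by
    apply zorn_subset_nonempty S ?_ F₀ ⟨hF₀, huF₀⟩
    intro c hcS hchain hcne
    refine ⟨⋃₀ c, ⟨⟨?_, ?_, ?_⟩, ?_⟩, fun s hs => Set.subset_sUnion_of_mem hs⟩
    · rintro v ⟨F, hFc, hvF⟩
      exact (hcS hFc).1.1 hvF
    · rintro a ⟨Fa, hFa, haFa⟩ b ⟨Fb, hFb, hbFb⟩ t ht0 ht1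
      rcases hchain.total hFa hFb with hab | hba
      · exact ⟨Fb, hFb, (hcS hFb).1.2.1 a (hab haFa) b hbFb t ht0 ht1⟩
      · exact ⟨Fa, hFa, (hcS hFa).1.2.1 a haFa b (hba hbFb) t ht0 ht1⟩
    · rintro a b ha hb ⟨F, hFc, hmF⟩
      obtain ⟨h1, h2⟩ := (hcS hFc).1.2.2 a b ha hb hmF
      exact ⟨⟨F, hFc, h1⟩, ⟨F, hFc, h2⟩⟩
    · obtain ⟨F, hFc⟩ := hcne
      exact ⟨F, hFc, (hcS hFc).2⟩
  obtain ⟨m, _, ⟨hmface, hum⟩, hmax⟩ := hzorn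
  refine ⟨m, ⟨hmface, ?_⟩, hum⟩
  intro F' hF' hsub
  exact le_antisymm (hmax ⟨hF', hsub hum⟩ hsub) hsub

/-- If a proper subspace `Y` of a Banach space `X` intersects the relative
interior of every maximal face of `B_X`, then `Y` is strongly anti-coproximinal in `X`. -/
theorem stronglyAntiCoproximinal_of_meets_relInt_of_maximal_faces
    {𝕜 X : Type*} [RCLike 𝕜] [NormedAddCommGroup X] [NormedSpace 𝕜 X] [CompleteSpace X]
    (Y : Submodule 𝕜 X) (hYp : Y ≠ ⊤)
    (h : ∀ F : Set X, IsMaximalFaceOfBall 𝕜 F → ∃ y ∈ Y, MemRelIntFace 𝕜 F y) :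
    StronglyAntiCoproximinal 𝕜 (Y : Set X) := by
  intro x hx ε hε0 hε1
  set u : X := ((‖x‖⁻¹ : ℝ) : 𝕜) • x with hu_def
  have hxn : (0:ℝ) < ‖x‖ := norm_pos_iff.mpr hx
  have hu : ‖u‖ = 1 := by
    rw [hu_def, norm_smul, RCLike.norm_ofReal, abs_of_nonneg (by positivity)]
    field_simp
  obtain ⟨F, hF, huF⟩ := aux_exists_maximal_face 𝕜 u hu
  obtain ⟨y, hyY, hyF, hint⟩ := h F hF
  obtain ⟨z, hzF, t, ht0, ht1, hrepr⟩ := hint u huF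
  refine ⟨y, hyY, ?_⟩
  intro hcon
  have key := hcon ((-((1 - t) * ‖x‖⁻¹) : ℝ) : 𝕜)
  have hlamx : ((-((1 - t) * ‖x‖⁻¹) : ℝ) : 𝕜) • x = -(((1 - t : ℝ)) : 𝕜) • u := by
    rw [hu_def, smul_smul]
    congr 1
    push_cast
    ring
  have hsum : y + ((-((1 - t) * ‖x‖⁻¹) : ℝ) : 𝕜) • x = ((t : ℝ) : 𝕜) • z := by
    rw [hlamx, hrepr]
    module
  have hzn : ‖z‖ = 1 := hF.1.1 hzF
  have hyn : ‖y‖ = 1 := hF.1.1 hyF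
  have h1 : ‖y + ((-((1 - t) * ‖x‖⁻¹) : ℝ) : 𝕜) • x‖ = t := by
    rw [hsum, norm_smul, RCLike.norm_ofReal, abs_of_nonneg ht0.le, hzn, mul_one]
  have h2 : ‖((-((1 - t) * ‖x‖⁻¹) : ℝ) : 𝕜) • x‖ = 1 - t := by
    rw [hlamx, neg_smul, norm_neg, norm_smul, RCLike.norm_ofReal, abs_of_nonneg (by linarith), hu, mul_one]
  rw [h1, h2, hyn] at key
  nlinarith
end

section
/- Let Y be a linear subspace of c₀ (the space of 𝕂-valued sequences converging to 0, with the supremum norm). The following are equivalent: (i) Y is strongly anti-coproximinal in c₀; (ii) Y is anti-coproximinal in c₀; (iii) for every r ∈ ℕ there exists y = (y₁, y₂, …) ∈ Y such that |y_r| > |y_n| for all n ∈ ℕ with n ≠ r. -/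
open Filter Topology Metric

section Aux

variable {𝕜 : Type*} [RCLike 𝕜]

lemma c0_le_norm (f : ZeroAtInftyContinuousMap ℕ 𝕜) (n : ℕ) : ‖f n‖ ≤ ‖f‖ := by
  rw [← ZeroAtInftyContinuousMap.norm_toBCF_eq_norm]
  exact f.toBCF.norm_coe_le_norm n

lemma c0_norm_le (f : ZeroAtInftyContinuousMap ℕ 𝕜) {C : ℝ} (hC : 0 ≤ C)
    (h : ∀ n, ‖f n‖ ≤ C) : ‖f‖ ≤ C := by
  rw [← ZeroAtInftyContinuousMap.norm_toBCF_eq_norm]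
  exact (BoundedContinuousFunction.norm_le hC).2 h

lemma c0_tendsto (f : ZeroAtInftyContinuousMap ℕ 𝕜) :
    Tendsto (fun n => ‖f n‖) atTop (𝓝 0) := by
  have h := ZeroAtInftyContinuousMapClass.zero_at_infty f
  rw [cocompact_eq_cofinite, Nat.cofinite_eq_atTop] at h
  simpa using h.norm

lemma c0_exists_max (f : ZeroAtInftyContinuousMap ℕ 𝕜) (hf : f ≠ 0) :
    ∃ r, f r ≠ 0 ∧ ∀ n, ‖f n‖ ≤ ‖f r‖ := by
  obtain ⟨n₀, hn₀⟩ : ∃ n, f n ≠ 0 := by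
    by_contra h
    push_neg at h
    exact hf (DFunLike.ext _ _ fun n => by simpa using h n)
  have hc : 0 < ‖f n₀‖ := norm_pos_iff.2 hn₀
  obtain ⟨N, hN⟩ := Filter.eventually_atTop.mp ((c0_tendsto f).eventually (gt_mem_nhds hc))
  obtain ⟨m, hm, hmax⟩ := Finset.exists_max_image (Finset.range (max N n₀ + 1))
    (fun n => ‖f n‖) ⟨n₀, Finset.mem_range.2 (Nat.lt_succ_of_le (le_max_right _ _))⟩
  have hn₀m : ‖f n₀‖ ≤ ‖f m‖ :=
    hmax n₀ (Finset.mem_range.2 (Nat.lt_succ_of_le (le_max_right _ _)))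
  refine ⟨m, norm_pos_iff.1 (lt_of_lt_of_le hc hn₀m), fun n => ?_⟩
  by_cases hn : n < max N n₀ + 1
  · exact hmax n (Finset.mem_range.2 hn)
  · push_neg at hn
    exact le_trans (hN n (le_trans (Nat.le_succ_of_le (le_max_left _ _)) hn)).le hn₀m

lemma c0_offmax (y : ZeroAtInftyContinuousMap ℕ 𝕜) (r : ℕ)
    (h : ∀ n, n ≠ r → ‖y n‖ < ‖y r‖) :
    ∃ M, 0 ≤ M ∧ M < ‖y r‖ ∧ ∀ n, n ≠ r → ‖y n‖ ≤ M := by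
  have hc : 0 < ‖y r‖ := lt_of_le_of_lt (norm_nonneg _) (h (r + 1) (Nat.succ_ne_self r))
  obtain ⟨N, hN⟩ := Filter.eventually_atTop.mp
    ((c0_tendsto y).eventually (gt_mem_nhds (half_pos hc)))
  rcases Finset.eq_empty_or_nonempty ((Finset.range N).erase r) with he | hne
  · refine ⟨‖y r‖ / 2, (half_pos hc).le, half_lt_self hc, fun n hn => ?_⟩
    have : N ≤ n := by
      by_contra hlt
      push_neg at hlt
      exact (Finset.eq_empty_iff_forall_notMem.1 he n)
        (Finset.mem_erase.2 ⟨hn, Finset.mem_range.2 hlt⟩)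
    exact (hN n this).le
  · obtain ⟨m, hm, hmax⟩ := Finset.exists_max_image _ (fun n => ‖y n‖) hne
    refine ⟨max (‖y r‖ / 2) ‖y m‖, le_trans (half_pos hc).le (le_max_left _ _),
      max_lt (half_lt_self hc) (h m (Finset.mem_erase.1 hm).1), fun n hn => ?_⟩
    by_cases hlt : n < N
    · exact le_trans (hmax n (Finset.mem_erase.2 ⟨hn, Finset.mem_range.2 hlt⟩))
        (le_max_right _ _)
    · push_neg at hlt
      exact le_trans (hN n hlt).le (le_max_left _ _)

/-- The indicator of `{r}` as an element of `c₀`. -/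
noncomputable def c0Single (𝕜 : Type*) [RCLike 𝕜] (r : ℕ) : ZeroAtInftyContinuousMap ℕ 𝕜 :=
  ⟨⟨fun n => if n = r then 1 else 0, continuous_of_discreteTopology⟩, by
    rw [cocompact_eq_cofinite]
    refine tendsto_const_nhds.congr' ?_
    rw [Filter.EventuallyEq, Filter.eventually_cofinite]
    refine Set.Finite.subset (Set.finite_singleton r) (fun n hn => ?_)
    simp only [Set.mem_setOf_eq, ContinuousMap.coe_mk] at hn
    by_contra hr
    rw [Set.mem_singleton_iff] at hr
    exact hn (by rw [if_neg hr])⟩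

lemma c0Single_apply (r n : ℕ) :
    c0Single 𝕜 r n = if n = r then (1 : 𝕜) else 0 := rfl

lemma c0_apply_add_smul (y x : ZeroAtInftyContinuousMap ℕ 𝕜) (lam : 𝕜) (n : ℕ) :
    (y + lam • x) n = y n + lam * x n := rfl

end Aux

/-- `S` is anti-coproximinal. -/
def AntiCoproximinal (𝕜 : Type*) {X : Type*} [RCLike 𝕜] [NormedAddCommGroup X]
    [NormedSpace 𝕜 X] (S : Set X) : Prop :=
  ∀ x : X, x ≠ 0 → ∃ y ∈ S, ¬ ∀ lam : 𝕜, ‖y‖ ≤ ‖y + lam • x‖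

section Main

variable {𝕜 : Type*} [RCLike 𝕜]

lemma key3to1 (Y : Submodule 𝕜 (ZeroAtInftyContinuousMap ℕ 𝕜))
    (h3 : ∀ r : ℕ, ∃ y ∈ Y, ∀ n : ℕ, n ≠ r → ‖y n‖ < ‖y r‖) :
    StronglyAntiCoproximinal 𝕜 (Y : Set (ZeroAtInftyContinuousMap ℕ 𝕜)) := by
  intro x hx ε hε0 hε1
  obtain ⟨r, hxr, hxmax⟩ := c0_exists_max x hx
  obtain ⟨y, hyY, hy⟩ := h3 r
  obtain ⟨M, hM0, hMlt, hMle⟩ := c0_offmax y r hy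
  set a := ‖y r‖ with ha_def
  have ha : 0 < a := lt_of_le_of_lt hM0 hMlt
  set b := ‖x r‖ with hb_def
  have hbpos : 0 < b := norm_pos_iff.2 hxr
  set t : ℝ := min (1/2) ((a - M) / (2 * a * (1 + ε))) with ht_def
  have ht0 : 0 < t := lt_min (by norm_num) (div_pos (sub_pos.2 hMlt) (by positivity))
  have hthalf : t ≤ 1/2 := min_le_left _ _
  have htkey : t * a * (1 + ε) < a - M := by
    have h1 : t ≤ (a - M) / (2 * a * (1 + ε)) := min_le_right _ _
    have h2 : t * a * (1 + ε) ≤ ((a - M) / (2 * a * (1 + ε))) * a * (1 + ε) := by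
      apply mul_le_mul_of_nonneg_right (mul_le_mul_of_nonneg_right h1 ha.le) (by linarith)
    have h3 : ((a - M) / (2 * a * (1 + ε))) * a * (1 + ε) = (a - M) / 2 := by
      field_simp
    linarith [sub_pos.2 hMlt]
  set lam : 𝕜 := -((t : 𝕜) * y r * (x r)⁻¹) with hlam_def
  -- norm computations
  have hynorm : ‖y‖ = a := le_antisymm
    (c0_norm_le y ha.le (fun n => by
      by_cases hn : n = r
      · subst hn; exact le_rfl
      · exact (hy n hn).le))
    (c0_le_norm y r)
  have hxnorm : ‖x‖ = b := le_antisymm (c0_norm_le x hbpos.le hxmax) (c0_le_norm x r)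
  have hlamnorm : ‖lam‖ = t * a * b⁻¹ := by
    rw [hlam_def, norm_neg, norm_mul, norm_mul, norm_inv, RCLike.norm_ofReal,
      abs_of_nonneg ht0.le]
  have hsmul : ‖lam • x‖ ≤ t * a := by
    have hns : ‖lam • x‖ = ‖lam‖ * ‖x‖ := norm_smul lam x
    rw [hns, hlamnorm, hxnorm]
    rw [mul_assoc, inv_mul_cancel₀ hbpos.ne', mul_one]
  -- coordinatewise bound
  have hcoord : ∀ n, ‖(y + lam • x) n‖ ≤ max (a * (1 - t)) (M + t * a) := by
    intro n
    by_cases hn : n = r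
    · rw [hn]
      have hval : (y + lam • x) r = (1 - (t : 𝕜)) * y r := by
        rw [c0_apply_add_smul, hlam_def, neg_mul, mul_assoc, inv_mul_cancel₀ hxr, mul_one]
        ring
      rw [hval, norm_mul]
      have h1t : ‖(1 : 𝕜) - (t : 𝕜)‖ = 1 - t := by
        rw [show (1 : 𝕜) - (t : 𝕜) = ((1 - t : ℝ) : 𝕜) by push_cast; ring,
          RCLike.norm_ofReal, abs_of_nonneg (by linarith)]
      rw [h1t]
      exact le_max_of_le_left (by rw [mul_comm])
    · rw [c0_apply_add_smul]
      refine le_max_of_le_right ?_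
      calc ‖y n + lam * x n‖ ≤ ‖y n‖ + ‖lam‖ * ‖x n‖ := by
            rw [← norm_mul lam (x n)]; exact norm_add_le _ _
        _ ≤ M + t * a := by
            refine add_le_add (hMle n hn) ?_
            rw [hlamnorm]
            calc t * a * b⁻¹ * ‖x n‖ ≤ t * a * b⁻¹ * b :=
              mul_le_mul_of_nonneg_left (hxmax n) (by positivity)
            _ = t * a := by rw [mul_assoc, inv_mul_cancel₀ hbpos.ne', mul_one]
  have hnormbound : ‖y + lam • x‖ ≤ max (a * (1 - t)) (M + t * a) :=
    c0_norm_le _ (le_max_of_le_left (by nlinarith)) hcoord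
  have hmaxlt : max (a * (1 - t)) (M + t * a) < a - ε * (t * a) := by
    apply max_lt
    · nlinarith [mul_lt_mul_of_pos_right hε1 (mul_pos ht0 ha)]
    · nlinarith [htkey]
  refine ⟨y, hyY, fun hall => ?_⟩
  have H := hall lam
  rw [hynorm] at H
  have : ε * ‖lam • x‖ ≤ ε * (t * a) := mul_le_mul_of_nonneg_left hsmul hε0
  linarith

lemma key2to3 (Y : Submodule 𝕜 (ZeroAtInftyContinuousMap ℕ 𝕜))
    (hA : AntiCoproximinal 𝕜 (Y : Set (ZeroAtInftyContinuousMap ℕ 𝕜))) :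
    ∀ r : ℕ, ∃ y ∈ Y, ∀ n : ℕ, n ≠ r → ‖y n‖ < ‖y r‖ := by
  intro r
  by_contra hcon
  push_neg at hcon
  have hsne : c0Single 𝕜 r ≠ 0 := by
    intro h
    have h2 := DFunLike.congr_fun h r
    rw [c0Single_apply, if_pos rfl] at h2
    simp at h2
  obtain ⟨y, hyY, hy⟩ := hA (c0Single 𝕜 r) hsne
  apply hy
  intro lam
  obtain ⟨n, hnr, hn⟩ := hcon y hyY
  refine c0_norm_le y (norm_nonneg _) (fun m => ?_)
  by_cases hm : m = r
  · rw [hm]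
    calc ‖y r‖ ≤ ‖y n‖ := hn
      _ = ‖(y + lam • c0Single 𝕜 r) n‖ := by
          rw [c0_apply_add_smul, c0Single_apply, if_neg hnr, mul_zero, add_zero]
      _ ≤ _ := c0_le_norm _ n
  · calc ‖y m‖ = ‖(y + lam • c0Single 𝕜 r) m‖ := by
          rw [c0_apply_add_smul, c0Single_apply, if_neg hm, mul_zero, add_zero]
      _ ≤ _ := c0_le_norm _ m

end Main

/-- For a subspace `Y` of `c₀` (𝕜-valued sequences vanishing at infinity,
sup norm), the following are equivalent: (i) `Y` is strongly anti-coproximinal;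
(ii) `Y` is anti-coproximinal; (iii) for every `r ∈ ℕ` there is `y ∈ Y` with
`|y_r| > |y_n|` for all `n ≠ r`. -/
theorem antiCoproximinal_c0_iff
    {𝕜 : Type*} [RCLike 𝕜] (Y : Submodule 𝕜 (ZeroAtInftyContinuousMap ℕ 𝕜)) :
    (StronglyAntiCoproximinal 𝕜 (Y : Set (ZeroAtInftyContinuousMap ℕ 𝕜)) ↔
      AntiCoproximinal 𝕜 (Y : Set (ZeroAtInftyContinuousMap ℕ 𝕜))) ∧
    (AntiCoproximinal 𝕜 (Y : Set (ZeroAtInftyContinuousMap ℕ 𝕜)) ↔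
      ∀ r : ℕ, ∃ y ∈ Y, ∀ n : ℕ, n ≠ r → ‖y n‖ < ‖y r‖) := by
  have key1to2 : StronglyAntiCoproximinal 𝕜 (Y : Set (ZeroAtInftyContinuousMap ℕ 𝕜)) →
      AntiCoproximinal 𝕜 (Y : Set (ZeroAtInftyContinuousMap ℕ 𝕜)) := by
    intro hS x hx
    obtain ⟨y, hyY, hy⟩ := hS x hx 0 le_rfl one_pos
    exact ⟨y, hyY, fun h => hy (fun lam => by simpa using h lam)⟩
  exact ⟨⟨key1to2, fun h => key3to1 Y (key2to3 Y h)⟩,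
    ⟨key2to3 Y, fun h => key1to2 (key3to1 Y h)⟩⟩
end
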